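/- Let a > 1, δ > 0 and b ≤ -4(a+1)²/3. Then the system ẋ = y - δ(x³/3 + b·x), ẏ = -(x - 1 - a) has no nonconstant periodic solution whose first component stays positive; that is, every pair of differentiable functions x, y : ℝ → ℝ with x(t) > 0 for all t, x′(t) = y(t) - δ(x(t)³/3 + b·x(t)) and y′(t) = -(x(t) - 1 - a) for all t, which is periodic of some period T > 0, is constant. -/

import Mathlib

open Set Filter Topology

section Helpers

/-- integer periodicity -/
lemma per_int {f : ℝ → ℝ} {T : ℝ} (hper : ∀ t, f (t + T) = f t) :
    ∀ (k : ℤ) (t : ℝ), f (t + k * T) = f t := by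
  intro k
  induction k using Int.induction_on with
  | zero => simp
  | succ n ih =>
    intro t
    have h1 : t + ((n : ℕ) + 1 : ℤ) * T = (t + T) + (n : ℤ) * T := by push_cast; ring
    push_cast
    push_cast at h1 ih
    rw [h1, ih (t + T), hper]
  | pred n ih =>
    intro t
    have h1 : t + (-(n : ℕ) - 1 : ℤ) * T = (t - T) + (-(n:ℤ)) * T := by push_cast; ring
    push_cast
    push_cast at h1 ih
    rw [h1, ih (t - T)]
    have := hper (t - T)
    rw [sub_add_cancel] at this
    exact this.symm

/-- value anywhere equals value somewhere in `[0, T]` -/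
lemma per_reduce {f : ℝ → ℝ} {T : ℝ} (hT : 0 < T) (hper : ∀ t, f (t + T) = f t) (t : ℝ) :
    ∃ t₀ ∈ Icc 0 T, f t = f t₀ := by
  refine ⟨t - ⌊t / T⌋ * T, ?_, ?_⟩
  · constructor
    · have := Int.sub_floor_div_mul_nonneg t hT
      linarith
    · have := Int.sub_floor_div_mul_lt t hT
      linarith
  · have := per_int hper ⌊t / T⌋ (t - ⌊t / T⌋ * T)
    rw [sub_add_cancel] at this
    exact this

lemma const_of_monotone_periodic {f : ℝ → ℝ} {T : ℝ} (hT : 0 < T)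
    (hper : ∀ t, f (t + T) = f t) (hmono : Monotone f) : ∀ t, f t = f 0 := by
  have hn : ∀ (n : ℕ) (t : ℝ), f (t + n * T) = f t := by
    intro n t
    have := per_int hper (n : ℤ) t
    push_cast at this
    exact this
  intro t
  rcases le_total t 0 with h | h
  · refine le_antisymm (hmono h) ?_
    obtain ⟨n, hnn⟩ := exists_nat_ge ((0 - t) / T)
    have h2 : 0 - t ≤ n * T := by
      rw [div_le_iff₀ hT] at hnn
      linarith
    have h3 : (0:ℝ) ≤ t + n * T := by linarith
    calc f 0 ≤ f (t + n * T) := hmono h3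
    _ = f t := hn n t
  · refine le_antisymm ?_ (hmono h)
    obtain ⟨n, hnn⟩ := exists_nat_ge ((t - 0) / T)
    have h2 : t - 0 ≤ n * T := by
      rw [div_le_iff₀ hT] at hnn
      linarith
    have h3 : t ≤ 0 + n * T := by linarith
    calc f t ≤ f (0 + n * T) := hmono h3
    _ = f 0 := hn n 0

lemma pos_after {f : ℝ → ℝ} {α d : ℝ} (hf : HasDerivAt f d α) (h0 : f α = 0) (hd : 0 < d) :
    ∃ ε > 0, ∀ t, α < t → t < α + ε → 0 < f t := by
  have hs := hasDerivAt_iff_tendsto_slope.1 hf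
  have h1 : ∀ᶠ t in 𝓝[≠] α, d / 2 < slope f α t := hs.eventually (eventually_gt_nhds (by linarith))
  have h2 : ∀ᶠ t in 𝓝[>] α, d / 2 < slope f α t :=
    h1.filter_mono (nhdsWithin_mono _ fun z hz => ne_of_gt hz)
  rcases mem_nhdsGT_iff_exists_Ioo_subset.1 h2 with ⟨u, hu, hsub⟩
  refine ⟨u - α, by simpa using hu, fun t ht1 ht2 => ?_⟩
  have htm : t ∈ Ioo α u := ⟨ht1, by linarith⟩
  have hst := hsub htm
  simp only [mem_setOf_eq, slope_def_field, h0, sub_zero] at hst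
  have h4 : 0 < t - α := by linarith
  have h5 : d / 2 * (t - α) < f t := (lt_div_iff₀ h4).1 hst
  nlinarith


/-- negativity just after a zero with negative derivative -/
lemma neg_after {f : ℝ → ℝ} {α d : ℝ} (hf : HasDerivAt f d α) (h0 : f α = 0) (hd : d < 0) :
    ∃ ε > 0, ∀ t, α < t → t < α + ε → f t < 0 := by
  obtain ⟨ε, hε, h⟩ := pos_after (f := fun t => -(f t)) (hf.neg) (by simp [h0]) (by linarith)
  exact ⟨ε, hε, fun t h1 h2 => by have := h t h1 h2; simpa using this⟩

/-- if `f > 0` on `(α, β)` and `f β = 0` then the derivative at `β` is `≤ 0`. -/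
lemma der_nonpos_of_pos_before {f : ℝ → ℝ} {α β d : ℝ} (hαβ : α < β)
    (hf : HasDerivAt f d β) (h0 : f β = 0) (hpos : ∀ t, α < t → t < β → 0 < f t) : d ≤ 0 := by
  have hs := hasDerivAt_iff_tendsto_slope.1 hf
  have hs' : Tendsto (slope f β) (𝓝[<] β) (𝓝 d) :=
    hs.mono_left (nhdsWithin_mono _ fun z hz => ne_of_lt hz)
  have hev : ∀ᶠ t in 𝓝[<] β, slope f β t ≤ 0 := by
    filter_upwards [Ioo_mem_nhdsLT_of_mem (show β ∈ Ioc α β from ⟨hαβ, le_refl _⟩)] with t ht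
    have h1 : 0 < f t := hpos t ht.1 ht.2
    rw [slope_def_field, h0, sub_zero]
    apply div_nonpos_of_nonneg_of_nonpos (by linarith)
    linarith [ht.2]
  exact le_of_tendsto hs' hev

/-- if `f < 0` on `(α, β)` and `f β = 0` then the derivative at `β` is `≥ 0`. -/
lemma der_nonneg_of_neg_before {f : ℝ → ℝ} {α β d : ℝ} (hαβ : α < β)
    (hf : HasDerivAt f d β) (h0 : f β = 0) (hneg : ∀ t, α < t → t < β → f t < 0) : 0 ≤ d := by
  have := der_nonpos_of_pos_before (f := fun t => -(f t)) hαβ hf.neg (by simp [h0])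
    (fun t h1 h2 => by simpa using (hneg t h1 h2))
  linarith

/-- Inverse of a continuous strictly monotone function on a compact interval:
existence, right/left inverse, continuity. -/
lemma inv_package {φ : ℝ → ℝ} {α β : ℝ} (hαβ : α ≤ β) (hc : ContinuousOn φ (Icc α β))
    (hm : StrictMonoOn φ (Icc α β)) :
    ∃ ψ : ℝ → ℝ, (∀ η ∈ Icc (φ α) (φ β), ψ η ∈ Icc α β ∧ φ (ψ η) = η) ∧
      (∀ t ∈ Icc α β, ψ (φ t) = t) ∧ ContinuousOn ψ (Icc (φ α) (φ β)) := by
  have hsur : ∀ η : ℝ, ∃ τ : ℝ, η ∈ Icc (φ α) (φ β) → (τ ∈ Icc α β ∧ φ τ = η) := by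
    intro η
    by_cases hη : η ∈ Icc (φ α) (φ β)
    · obtain ⟨τ, hτ1, hτ2⟩ := intermediate_value_Icc hαβ hc hη
      exact ⟨τ, fun _ => ⟨hτ1, hτ2⟩⟩
    · exact ⟨α, fun h => absurd h hη⟩
  choose ψ hψ using hsur
  have hmemIcc : ∀ t ∈ Icc α β, φ t ∈ Icc (φ α) (φ β) := fun t ht =>
    ⟨hm.monotoneOn (left_mem_Icc.2 hαβ) ht ht.1, hm.monotoneOn ht (right_mem_Icc.2 hαβ) ht.2⟩
  have hleft : ∀ t ∈ Icc α β, ψ (φ t) = t := by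
    intro t ht
    have h1 := hψ (φ t) (hmemIcc t ht)
    exact hm.injOn h1.1 ht h1.2
  refine ⟨ψ, fun η hη => hψ η hη, hleft, ?_⟩
  -- continuity
  intro η₀ hη₀
  obtain ⟨hτ₀mem, hτ₀⟩ := hψ η₀ hη₀
  set τ₀ := ψ η₀ with hτ₀def
  rw [Metric.continuousWithinAt_iff]
  intro ε hε
  set lo := max α (τ₀ - ε / 2) with hlo
  set hi := min β (τ₀ + ε / 2) with hhi
  have hlomem : lo ∈ Icc α β := ⟨le_max_left _ _, max_le hαβ (by linarith [hτ₀mem.2])⟩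
  have hhimem : hi ∈ Icc α β := ⟨le_min hαβ (by linarith [hτ₀mem.1]), min_le_left _ _⟩
  have hloτ : lo ≤ τ₀ := max_le hτ₀mem.1 (by linarith)
  have hτhi : τ₀ ≤ hi := le_min hτ₀mem.2 (by linarith)
  have hd1 : 0 < (if lo < τ₀ then η₀ - φ lo else 1) := by
    split_ifs with h
    · have := hm hlomem hτ₀mem h
      rw [hτ₀] at this; linarith
    · norm_num
  have hd2 : 0 < (if τ₀ < hi then φ hi - η₀ else 1) := by
    split_ifs with h
    · have := hm hτ₀mem hhimem h
      rw [hτ₀] at this; linarith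
    · norm_num
  refine ⟨min (if lo < τ₀ then η₀ - φ lo else 1) (if τ₀ < hi then φ hi - η₀ else 1),
    lt_min hd1 hd2, ?_⟩
  intro η hη hdist
  rw [Real.dist_eq] at hdist
  have hψη := hψ η hη
  have h1 : lo ≤ ψ η := by
    by_contra hcon
    push_neg at hcon
    have hαlt : α < lo := lt_of_le_of_lt hψη.1.1 hcon
    have hlo_lt : lo < τ₀ := by
      rcases max_choice α (τ₀ - ε / 2) with h | h
      · rw [hlo] at hαlt; rw [h] at hαlt; exact absurd hαlt (lt_irrefl _)
      · rw [hlo, h]; linarith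
    have h2 : φ (ψ η) < φ lo := hm hψη.1 hlomem hcon
    rw [hψη.2] at h2
    have hmin := lt_of_lt_of_le hdist (min_le_left _ _)
    rw [if_pos hlo_lt] at hmin
    have habs : η₀ - η ≤ |η - η₀| := by rw [abs_sub_comm]; exact le_abs_self _
    linarith
  have h2 : ψ η ≤ hi := by
    by_contra hcon
    push_neg at hcon
    have hβlt : hi < β := lt_of_lt_of_le hcon hψη.1.2
    have hhi_lt : τ₀ < hi := by
      rcases min_choice β (τ₀ + ε / 2) with h | h
      · rw [hhi] at hβlt; rw [h] at hβlt; exact absurd hβlt (lt_irrefl _)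
      · rw [hhi, h]; linarith
    have h2' : φ hi < φ (ψ η) := hm hhimem hψη.1 hcon
    rw [hψη.2] at h2'
    have hmin := lt_of_lt_of_le hdist (min_le_right _ _)
    rw [if_pos hhi_lt] at hmin
    have habs : η - η₀ ≤ |η - η₀| := le_abs_self _
    linarith
  rw [Real.dist_eq]
  have hlo2 : τ₀ - ε / 2 ≤ lo := by rw [hlo]; exact le_max_right _ _
  have hhi2 : hi ≤ τ₀ + ε / 2 := by rw [hhi]; exact min_le_right _ _
  have hb : |ψ η - τ₀| ≤ ε / 2 := abs_le.2 ⟨by linarith, by linarith⟩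
  linarith

end Helpers

set_option maxHeartbeats 8000000 in
/-- For `a > 1`, `δ > 0`, `b ≤ -4(a+1)²/3`, the smooth system `ẋ = y - δ(x³/3 + bx)`,
`ẏ = -(x - 1 - a)` has no nonconstant periodic solution with `x > 0`
(no small limit cycle). -/
theorem no_small_limit_cycle (a b δ : ℝ) (ha : 1 < a) (hδ : 0 < δ)
    (hb : b ≤ -4 * (a + 1) ^ 2 / 3)
    (x y : ℝ → ℝ) (hpos : ∀ t : ℝ, 0 < x t)
    (hx : ∀ t : ℝ, HasDerivAt x (y t - δ * ((x t) ^ 3 / 3 + b * x t)) t)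
    (hy : ∀ t : ℝ, HasDerivAt y (-(x t - 1 - a)) t)
    (T : ℝ) (hT : 0 < T)
    (hper : ∀ t : ℝ, x (t + T) = x t ∧ y (t + T) = y t) :
    ∃ cx cy : ℝ, ∀ t : ℝ, x t = cx ∧ y t = cy := by
  classical
  set s : ℝ := a + 1 with hs_def
  have hs2 : 2 < s := by rw [hs_def]; linarith
  have hs0 : 0 < s := by linarith
  have hbs : b ≤ -4 * s ^ 2 / 3 := by rw [hs_def]; linarith [hb]
  set Δ : ℝ → ℝ := fun v => v ^ 3 / 3 + s * v ^ 2 + (s ^ 2 + b) * v with hΔ_def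
  set u : ℝ → ℝ := fun t => x t - s with hu_def
  set Y : ℝ → ℝ := fun t => y t - δ * (s ^ 3 / 3 + b * s) with hY_def
  have hu' : ∀ t, HasDerivAt u (Y t - δ * Δ (u t)) t := by
    intro t
    have h := (hx t).sub_const s
    refine h.congr_deriv ?_
    simp only [hY_def, hΔ_def, hu_def]
    ring
  have hY' : ∀ t, HasDerivAt Y (-(u t)) t := by
    intro t
    have h := (hy t).sub_const (δ * (s ^ 3 / 3 + b * s))
    refine h.congr_deriv ?_
    simp only [hu_def, hs_def]
    ring
  have hucont : Continuous u := by
    have : Continuous x := continuous_iff_continuousAt.2 fun t => (hx t).continuousAt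
    fun_prop
  have hYcont : Continuous Y := by
    have : Continuous y := continuous_iff_continuousAt.2 fun t => (hy t).continuousAt
    fun_prop
  have hΔcont : Continuous Δ := by fun_prop
  have hpu : ∀ t, u (t + T) = u t := by
    intro t; simp only [hu_def, (hper t).1]
  have hpY : ∀ t, Y (t + T) = Y t := by
    intro t; simp only [hY_def, (hper t).2]
  have hub : ∀ t, -s < u t := by
    intro t; simp only [hu_def]; linarith [hpos t]
  -- algebra facts
  have halg_mono : ∀ v₁ v₂ : ℝ, -s ≤ v₁ → v₁ ≤ v₂ → v₂ ≤ s / 7 → Δ v₂ ≤ Δ v₁ := by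
    intro v₁ v₂ h1 h2 h3
    have key : Δ v₂ - Δ v₁ =
        (v₂ - v₁) * (((v₂ + s) ^ 2 + (v₂ + s) * (v₁ + s) + (v₁ + s) ^ 2) / 3 + b) := by
      simp only [hΔ_def]; ring
    have hp1 : 0 ≤ v₁ + s := by linarith
    have hp2 : 0 ≤ v₂ + s := by linarith
    have hq1 : v₁ + s ≤ 8 * s / 7 := by linarith
    have hq2 : v₂ + s ≤ 8 * s / 7 := by linarith
    have e1 : (v₁ + s) ^ 2 ≤ (8 * s / 7) ^ 2 := by nlinarith
    have e2 : (v₂ + s) ^ 2 ≤ (8 * s / 7) ^ 2 := by nlinarith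
    have e3 : (v₂ + s) * (v₁ + s) ≤ (8 * s / 7) ^ 2 := by nlinarith
    have hB : ((v₂ + s) ^ 2 + (v₂ + s) * (v₁ + s) + (v₁ + s) ^ 2) / 3 + b ≤ 0 := by
      nlinarith [sq_nonneg s]
    have h9 : (v₂ - v₁) * (((v₂ + s) ^ 2 + (v₂ + s) * (v₁ + s) + (v₁ + s) ^ 2) / 3 + b) ≤ 0 :=
      mul_nonpos_iff.2 (Or.inl ⟨sub_nonneg.2 h2, hB⟩)
    rw [← key] at h9
    linarith
  have halg_refl : ∀ v : ℝ, 0 ≤ v → v ≤ s → Δ v ≤ Δ (-v) := by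
    intro v h0 h1
    have key : Δ (-v) - Δ v = (2 * v / 3) * ((-3 * s ^ 2 - 3 * b) - v ^ 2) := by
      simp only [hΔ_def]; ring
    have h2 : 0 ≤ (2 * v / 3) * ((-3 * s ^ 2 - 3 * b) - v ^ 2) := by
      apply mul_nonneg (by linarith)
      nlinarith
    rw [← key] at h2
    linarith
  have halg_refl_strict : ∀ v : ℝ, 0 < v → v < s → Δ v < Δ (-v) := by
    intro v h0 h1
    have key : Δ (-v) - Δ v = (2 * v / 3) * ((-3 * s ^ 2 - 3 * b) - v ^ 2) := by
      simp only [hΔ_def]; ring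
    have h2 : 0 < (2 * v / 3) * ((-3 * s ^ 2 - 3 * b) - v ^ 2) := by
      apply mul_pos (by linarith)
      nlinarith
    rw [← key] at h2
    linarith
  have halg3 : ∀ v : ℝ, -(s / 7) ≤ v → v ≤ s / 7 → v * Δ v ≤ 0 := by
    intro v h1 h2
    have key : v * Δ v = v ^ 2 * (v ^ 2 / 3 + s * v + s ^ 2 + b) := by
      simp only [hΔ_def]; ring
    have hQ : v ^ 2 / 3 + s * v + s ^ 2 + b ≤ 0 := by nlinarith
    have h9 : v ^ 2 * (v ^ 2 / 3 + s * v + s ^ 2 + b) ≤ 0 :=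
      mul_nonpos_iff.2 (Or.inl ⟨sq_nonneg v, hQ⟩)
    rw [← key] at h9
    exact h9
  -- main goal reduction
  suffices hgoal : ∀ t, x t = x 0 ∧ y t = y 0 by exact ⟨x 0, y 0, hgoal⟩
  -- Case: u never positive (or never negative): y is monotone, hence constant
  by_cases hA : ∀ t, u t ≤ 0
  · have hym : Monotone y := by
      apply monotone_of_deriv_nonneg (fun t => (hy t).differentiableAt)
      intro t
      rw [(hy t).deriv]
      have := hA t
      simp only [hu_def, hs_def] at this
      linarith
    have hyc : ∀ t, y t = y 0 := const_of_monotone_periodic hT (fun t => (hper t).2) hym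
    have hxc : ∀ t, x t = a + 1 := by
      intro t
      have h1 : HasDerivAt y 0 t := by
        have he : y = fun _ => y 0 := funext hyc
        rw [he]; exact hasDerivAt_const t (y 0)
      have h2 := (hy t).unique h1
      linarith
    exact fun t => ⟨by rw [hxc t, hxc 0], hyc t⟩
  by_cases hB : ∀ t, 0 ≤ u t
  · have hym : Antitone y := by
      apply antitone_of_deriv_nonpos (fun t => (hy t).differentiableAt)
      intro t
      rw [(hy t).deriv]
      have := hB t
      simp only [hu_def, hs_def] at this
      linarith
    have hyc : ∀ t, y t = y 0 := by
      have := const_of_monotone_periodic (f := fun t => -(y t)) hT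
        (fun t => by simp [(hper t).2]) (fun t₁ t₂ h => neg_le_neg (hym h))
      intro t
      have h1 := this t
      simp only [neg_inj] at h1
      exact h1
    have hxc : ∀ t, x t = a + 1 := by
      intro t
      have h1 : HasDerivAt y 0 t := by
        have he : y = fun _ => y 0 := funext hyc
        rw [he]; exact hasDerivAt_const t (y 0)
      have h2 := (hy t).unique h1
      linarith
    exact fun t => ⟨by rw [hxc t, hxc 0], hyc t⟩
  -- Case: the orbit passes through the equilibrium: then it is constant
  by_cases hE : ∃ t₀, u t₀ = 0 ∧ Y t₀ = 0
  · obtain ⟨t₀, he1, he2⟩ := hE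
    set H : ℝ → ℝ := fun t => (u t) ^ 2 + (Y t) ^ 2 with hH_def
    have hH' : ∀ t, HasDerivAt H (-2 * δ * (u t * Δ (u t))) t := by
      intro t
      have h1 := ((hu' t).pow 2).add ((hY' t).pow 2)
      refine h1.congr_deriv ?_
      push_cast
      ring
    have hHcont : Continuous H := by fun_prop
    have hHnn : ∀ τ, 0 ≤ H τ := fun τ => by positivity
    have hH0 : H t₀ = 0 := by simp [hH_def, he1, he2]
    have claim : ∀ t, t ≤ t₀ → H t = 0 := by
      intro t ht
      by_contra hne
      have hpos0 : 0 < H t := lt_of_le_of_ne (hHnn t) (Ne.symm hne)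
      have ht' : t < t₀ := by
        rcases eq_or_lt_of_le ht with h | h
        · exfalso; rw [h, hH0] at hpos0; exact lt_irrefl _ hpos0
        · exact h
      set κ := min ((s / 7) ^ 2) (H t) with hκ_def
      have hκpos : 0 < κ := lt_min (by positivity) hpos0
      set Z := {τ : ℝ | τ ∈ Icc t t₀ ∧ κ ≤ H τ} with hZ_def
      have hZne : Z.Nonempty := ⟨t, ⟨left_mem_Icc.2 ht, min_le_right _ _⟩⟩
      have hZclosed : IsClosed Z := by
        have : Z = Icc t t₀ ∩ H ⁻¹' (Ici κ) := by
          ext τ; simp [hZ_def, mem_preimage, mem_Ici]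
        rw [this]
        exact isClosed_Icc.inter (isClosed_Ici.preimage hHcont)
      have hZbdd : BddAbove Z := ⟨t₀, fun τ hτ => hτ.1.2⟩
      set τs := sSup Z with hτs_def
      have hτsmem : τs ∈ Z := hZclosed.csSup_mem hZne hZbdd
      have hτst : τs < t₀ := by
        rcases lt_or_eq_of_le hτsmem.1.2 with h | h
        · exact h
        · exfalso; have := hτsmem.2; rw [h, hH0] at this; linarith
      have hsmall : ∀ τ', τs < τ' → τ' ≤ t₀ → H τ' < κ := by
        intro τ' h1 h2
        by_contra hc
        push_neg at hc
        have hmem : τ' ∈ Z := ⟨⟨le_trans hτsmem.1.1 (le_of_lt h1), h2⟩, hc⟩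
        have := le_csSup hZbdd hmem
        linarith
      have hzero : ∀ τ' ∈ Ioo τs t₀, H τ' = 0 := by
        intro τ' hτ'
        have hmo : MonotoneOn H (Icc τ' t₀) := by
          apply monotoneOn_of_deriv_nonneg (convex_Icc _ _) hHcont.continuousOn
            (fun z hz => (hH' z).differentiableAt.differentiableWithinAt)
          intro z hz
          rw [interior_Icc] at hz
          rw [(hH' z).deriv]
          have hz1 : H z < κ := hsmall z (lt_trans hτ'.1 hz.1) (le_of_lt hz.2)
          have hz2 : (u z) ^ 2 < (s / 7) ^ 2 := by
            have h3 : (u z) ^ 2 ≤ H z := by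
              have he : H z = (u z) ^ 2 + (Y z) ^ 2 := rfl
              rw [he]; nlinarith [sq_nonneg (Y z)]
            exact lt_of_le_of_lt h3 (lt_of_lt_of_le hz1 (min_le_left _ _))
          have habs1 : -(s / 7) ≤ u z := by nlinarith [sq_nonneg (u z + s / 7)]
          have habs2 : u z ≤ s / 7 := by nlinarith [sq_nonneg (u z - s / 7)]
          have := halg3 (u z) habs1 habs2
          nlinarith
        have h4 := hmo (show τ' ∈ Icc τ' t₀ from ⟨le_refl _, le_of_lt hτ'.2⟩)
          (show t₀ ∈ Icc τ' t₀ from ⟨le_of_lt hτ'.2, le_refl _⟩) (le_of_lt hτ'.2)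
        rw [hH0] at h4
        exact le_antisymm h4 (hHnn τ')
      have ht1 : Tendsto H (𝓝[>] τs) (𝓝 (H τs)) :=
        (hHcont.continuousAt (x := τs)).continuousWithinAt.tendsto
      have ht2 : Tendsto H (𝓝[>] τs) (𝓝 0) := by
        apply Tendsto.congr' ?_ tendsto_const_nhds
        filter_upwards [Ioo_mem_nhdsGT_of_mem (show τs ∈ Ico τs t₀ from ⟨le_refl _, hτst⟩)]
          with z hz using (hzero z hz).symm
      have := tendsto_nhds_unique ht1 ht2
      have := hτsmem.2
      linarith
    have hpH : ∀ t, H (t + T) = H t := by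
      intro t; simp only [hH_def, hpu t, hpY t]
    have hall : ∀ t, H t = 0 := by
      intro t
      obtain ⟨n, hn⟩ := exists_nat_ge ((t - t₀) / T)
      have h2 : t - t₀ ≤ n * T := by
        rw [div_le_iff₀ hT] at hn
        linarith
      have h4 := per_int hpH (-(n : ℤ)) t
      rw [← h4]
      apply claim
      push_cast
      linarith
    have hu0 : ∀ t, u t = 0 := by
      intro t
      have h5 := hall t
      have he : H t = (u t) ^ 2 + (Y t) ^ 2 := rfl
      rw [he] at h5
      nlinarith [sq_nonneg (u t), sq_nonneg (Y t)]
    have hY0 : ∀ t, Y t = 0 := by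
      intro t
      have h5 := hall t
      have he : H t = (u t) ^ 2 + (Y t) ^ 2 := rfl
      rw [he] at h5
      nlinarith [sq_nonneg (u t), sq_nonneg (Y t)]
    intro t
    constructor
    · have h1 := hu0 t
      have h2 := hu0 0
      simp only [hu_def] at h1 h2
      linarith
    · have h1 := hY0 t
      have h2 := hY0 0
      simp only [hY_def] at h1 h2
      linarith
  -- Main case: derive a contradiction
  exfalso
  push_neg at hA hB
  obtain ⟨tp, htp⟩ := hA
  obtain ⟨tn, htn⟩ := hB
  have hnoeq : ∀ t, u t = 0 → Y t ≠ 0 := fun t h1 h2 => hE ⟨t, h1, h2⟩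
  have hΔ0 : Δ 0 = 0 := by simp [hΔ_def]
  -- the derivative of u at a zero of u is Y
  have hu'0 : ∀ t, u t = 0 → HasDerivAt u (Y t) t := by
    intro t h
    have h1 := hu' t
    rw [h, hΔ0] at h1
    simpa using h1
  -- global maximum of Y
  obtain ⟨tM, htMmem, htMmax⟩ :=
    isCompact_Icc.exists_isMaxOn (nonempty_Icc.2 (le_of_lt hT)) hYcont.continuousOn
  have hYmax : ∀ t, Y t ≤ Y tM := by
    intro t
    obtain ⟨t₁, ht₁, he⟩ := per_reduce hT hpY t
    rw [he]; exact htMmax ht₁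
  have huM : u tM = 0 := by
    have hloc : IsLocalMax Y tM := Filter.Eventually.of_forall hYmax
    have := hloc.hasDerivAt_eq_zero (hY' tM)
    linarith
  set aM := Y tM with haM_def
  -- aM > 0 : there is an upward zero--crossing of u, where the derivative Y is ≥ 0
  have haM : 0 < aM := by
    obtain ⟨k, hk⟩ := exists_nat_ge ((tn - tp) / T + 1)
    have hkT : tn - tp + T ≤ k * T := by
      have hk' : (tn - tp) / T ≤ (k : ℝ) - 1 := by linarith
      rw [div_le_iff₀ hT] at hk'
      nlinarith
    have htp' : tn < tp + k * T := by linarith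
    have hup : 0 < u (tp + k * T) := by
      have h1 := per_int hpu (k : ℤ) tp
      push_cast at h1
      rw [h1]; exact htp
    have hZne : ∃ r ∈ Icc tn (tp + k * T), u r = 0 := by
      have h0 : (0:ℝ) ∈ Icc (u tn) (u (tp + k * T)) := ⟨le_of_lt htn, le_of_lt hup⟩
      obtain ⟨r, hr1, hr2⟩ := intermediate_value_Icc (le_of_lt htp') hucont.continuousOn h0
      exact ⟨r, hr1, hr2⟩
    set S := {r : ℝ | r ∈ Icc tn (tp + k * T) ∧ u r = 0} with hS_def
    have hSne : S.Nonempty := by obtain ⟨r, h1, h2⟩ := hZne; exact ⟨r, h1, h2⟩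
    have hSclosed : IsClosed S := by
      have : S = Icc tn (tp + k * T) ∩ u ⁻¹' {0} := by
        ext r; simp [hS_def]
      rw [this]
      exact isClosed_Icc.inter (isClosed_singleton.preimage hucont)
    have hSbdd : BddBelow S := ⟨tn, fun r hr => hr.1.1⟩
    set th := sInf S with hth_def
    have hthmem : th ∈ S := hSclosed.csInf_mem hSne hSbdd
    have hth0 : u th = 0 := hthmem.2
    have htnth : tn < th := by
      rcases lt_or_eq_of_le hthmem.1.1 with h | h
      · exact h
      · exfalso; rw [← h] at hth0; linarith
    have hneg : ∀ r, tn < r → r < th → u r < 0 := by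
      intro r h1 h2
      have hrmem : r ∈ Icc tn (tp + k * T) :=
        ⟨le_of_lt h1, le_trans (le_of_lt h2) hthmem.1.2⟩
      have hrne : u r ≠ 0 := by
        intro hc
        have : th ≤ r := csInf_le hSbdd ⟨hrmem, hc⟩
        linarith
      rcases lt_or_gt_of_ne hrne with h | h
      · exact h
      · exfalso
        have h0 : (0:ℝ) ∈ Icc (u tn) (u r) := ⟨le_of_lt htn, le_of_lt h⟩
        obtain ⟨ζ, hζ1, hζ2⟩ := intermediate_value_Icc (le_of_lt h1) hucont.continuousOn h0
        have hζmem : ζ ∈ S := ⟨⟨hζ1.1, le_trans hζ1.2 hrmem.2⟩, hζ2⟩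
        have : th ≤ ζ := csInf_le hSbdd hζmem
        linarith [hζ1.2]
    have hd := der_nonneg_of_neg_before htnth (hu'0 th hth0) hth0 hneg
    have := hnoeq th hth0
    have : 0 < Y th := lt_of_le_of_ne hd (Ne.symm this)
    linarith [hYmax th]
  -- first zero of u after tM : end of the right excursion
  have hstepM : ∃ ε > 0, ∀ r, tM < r → r < tM + ε → 0 < u r := by
    apply pos_after (hu'0 tM huM) huM haM
  obtain ⟨ε₀, hε₀, hstep⟩ := hstepM
  have hper_shift : ∀ t, ∃ r ∈ Icc tM (tM + T), u r = u t ∧ Y r = Y t := by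
    intro t
    have h1 := Int.sub_floor_div_mul_nonneg (t - tM) hT
    have h2 := Int.sub_floor_div_mul_lt (t - tM) hT
    refine ⟨t + (-⌊(t - tM) / T⌋ : ℤ) * T, ?_, ?_, ?_⟩
    · constructor
      · push_cast; linarith
      · push_cast; linarith
    · exact per_int hpu _ t
    · exact per_int hpY _ t
  -- construction of t_d : first zero of u after tM
  set ε₁ := min (ε₀ / 2) (T / 2) with hε₁_def
  have hε₁pos : 0 < ε₁ := lt_min (by linarith) (by linarith)
  have hε₁lt : ε₁ < ε₀ := lt_of_le_of_lt (min_le_left _ _) (by linarith)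
  have hε₁T : ε₁ ≤ T / 2 := min_le_right _ _
  have hposε : 0 < u (tM + ε₁) := hstep _ (by linarith) (by linarith)
  set Sd := {r : ℝ | r ∈ Icc (tM + ε₁) (tM + T) ∧ u r = 0} with hSd_def
  have huMT : u (tM + T) = 0 := by rw [hpu tM]; exact huM
  have hSdne : Sd.Nonempty := ⟨tM + T, ⟨by constructor <;> linarith, huMT⟩⟩
  have hSdclosed : IsClosed Sd := by
    have : Sd = Icc (tM + ε₁) (tM + T) ∩ u ⁻¹' {0} := by ext r; simp [hSd_def]
    rw [this]; exact isClosed_Icc.inter (isClosed_singleton.preimage hucont)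
  have hSdbdd : BddBelow Sd := ⟨tM + ε₁, fun r hr => hr.1.1⟩
  set td := sInf Sd with htd_def
  have htdmem : td ∈ Sd := hSdclosed.csInf_mem hSdne hSdbdd
  have htd0 : u td = 0 := htdmem.2
  have htdM : tM < td := lt_of_lt_of_le (by linarith) htdmem.1.1
  have htdT : td ≤ tM + T := htdmem.1.2
  have hupos : ∀ r, tM < r → r < td → 0 < u r := by
    intro r h1 h2
    by_cases hr : r < tM + ε₁
    · exact hstep r h1 (by linarith)
    · push_neg at hr
      have hrmem : r ∈ Icc (tM + ε₁) (tM + T) := ⟨hr, by linarith⟩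
      have hrne : u r ≠ 0 := by
        intro hc
        have : td ≤ r := csInf_le hSdbdd ⟨hrmem, hc⟩
        linarith
      rcases lt_or_gt_of_ne hrne with h | h
      · exfalso
        have h0 : (0:ℝ) ∈ Icc (u r) (u (tM + ε₁)) := ⟨le_of_lt h, le_of_lt hposε⟩
        obtain ⟨ζ, hζ1, hζ2⟩ := intermediate_value_Icc' hr hucont.continuousOn h0
        have hζmem : ζ ∈ Sd := ⟨⟨hζ1.1, by linarith [hζ1.2]⟩, hζ2⟩
        have : td ≤ ζ := csInf_le hSdbdd hζmem
        linarith [hζ1.2]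
      · exact h
  -- td < tM + T (otherwise u ≥ 0 everywhere)
  have htdT' : td < tM + T := by
    rcases lt_or_eq_of_le htdT with h | h
    · exact h
    · exfalso
      have hge : ∀ t, 0 ≤ u t := by
        intro t
        obtain ⟨r, hr, hru, _⟩ := hper_shift t
        rw [← hru]
        rcases eq_or_lt_of_le hr.1 with h1 | h1
        · rw [← h1, huM]
        · rcases eq_or_lt_of_le hr.2 with h2 | h2
          · rw [h2, huMT]
          · exact le_of_lt (hupos r h1 (by rw [h]; exact h2))
      exact absurd (hge tn) (not_le.2 htn)
  -- speed at td
  have hYtd : Y td < 0 := by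
    have hd := der_nonpos_of_pos_before htdM (hu'0 td htd0) htd0 hupos
    exact lt_of_le_of_ne hd (hnoeq td htd0)
  set c := -(Y td) with hc_def
  have hcpos : 0 < c := by rw [hc_def]; linarith
  -- construction of t₂ : first zero of u after td
  have hstepd : ∃ ε > 0, ∀ r, td < r → r < td + ε → u r < 0 := by
    apply neg_after (hu'0 td htd0) htd0 hYtd
  obtain ⟨ε₂', hε₂', hstep2⟩ := hstepd
  set ε₂ := min (ε₂' / 2) ((tM + T - td) / 2) with hε₂_def
  have hε₂pos : 0 < ε₂ := lt_min (by linarith) (by linarith)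
  have hε₂lt : ε₂ < ε₂' := lt_of_le_of_lt (min_le_left _ _) (by linarith)
  have hε₂T : td + ε₂ ≤ tM + T := by
    have := min_le_right (ε₂' / 2) ((tM + T - td) / 2)
    rw [hε₂_def]
    linarith [this]
  have hnegε : u (td + ε₂) < 0 := hstep2 _ (by linarith) (by linarith)
  set S2 := {r : ℝ | r ∈ Icc (td + ε₂) (tM + T) ∧ u r = 0} with hS2_def
  have hS2ne : S2.Nonempty := ⟨tM + T, ⟨by constructor <;> linarith, huMT⟩⟩
  have hS2closed : IsClosed S2 := by
    have : S2 = Icc (td + ε₂) (tM + T) ∩ u ⁻¹' {0} := by ext r; simp [hS2_def]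
    rw [this]; exact isClosed_Icc.inter (isClosed_singleton.preimage hucont)
  have hS2bdd : BddBelow S2 := ⟨td + ε₂, fun r hr => hr.1.1⟩
  set t₂ := sInf S2 with ht₂_def
  have ht₂mem : t₂ ∈ S2 := hS2closed.csInf_mem hS2ne hS2bdd
  have ht₂0 : u t₂ = 0 := ht₂mem.2
  have ht₂d : td < t₂ := lt_of_lt_of_le (by linarith) ht₂mem.1.1
  have huneg : ∀ r, td < r → r < t₂ → u r < 0 := by
    intro r h1 h2
    by_cases hr : r < td + ε₂
    · exact hstep2 r h1 (by linarith)
    · push_neg at hr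
      have hrmem : r ∈ Icc (td + ε₂) (tM + T) := ⟨hr, by linarith [ht₂mem.1.2]⟩
      have hrne : u r ≠ 0 := by
        intro hc
        have : t₂ ≤ r := csInf_le hS2bdd ⟨hrmem, hc⟩
        linarith
      rcases lt_or_gt_of_ne hrne with h | h
      · exact h
      · exfalso
        have h0 : (0:ℝ) ∈ Icc (u (td + ε₂)) (u r) := ⟨le_of_lt hnegε, le_of_lt h⟩
        obtain ⟨ζ, hζ1, hζ2⟩ := intermediate_value_Icc hr hucont.continuousOn h0
        have hζmem : ζ ∈ S2 := ⟨⟨hζ1.1, by linarith [hζ1.2, ht₂mem.1.2]⟩, hζ2⟩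
        have : t₂ ≤ ζ := csInf_le hS2bdd hζmem
        linarith [hζ1.2]
  have hYt₂ : 0 < Y t₂ := by
    have hd := der_nonneg_of_neg_before ht₂d (hu'0 t₂ ht₂0) ht₂0 huneg
    exact lt_of_le_of_ne hd (Ne.symm (hnoeq t₂ ht₂0))
  set a' := Y t₂ with ha'_def
  have ha'le : a' ≤ aM := hYmax t₂
  -- strict monotonicity of Y on the two excursions
  have hYanti : StrictAntiOn Y (Icc tM td) := by
    apply strictAntiOn_of_deriv_neg (convex_Icc _ _) hYcont.continuousOn
    intro z hz
    rw [interior_Icc] at hz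
    rw [(hY' z).deriv]
    have := hupos z hz.1 hz.2
    linarith
  have hYmono : StrictMonoOn Y (Icc td t₂) := by
    apply strictMonoOn_of_deriv_pos (convex_Icc _ _) hYcont.continuousOn
    intro z hz
    rw [interior_Icc] at hz
    rw [(hY' z).deriv]
    have := huneg z hz.1 hz.2
    linarith
  -- inverse parametrization of the right excursion by the Y-level
  have hYtdc : Y td = -c := by rw [hc_def]; ring
  obtain ⟨ψR, hψRspec0, hψRleft0, hψRcont0⟩ :=
    inv_package (φ := fun t => -(Y t)) (le_of_lt htdM)
      (hYcont.neg.continuousOn)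
      (fun p hp q hq hpq => by simp only [neg_lt_neg_iff]; exact hYanti hp hq hpq)
  have hψRspec : ∀ η ∈ Icc (-(Y tM)) (-(Y td)), ψR η ∈ Icc tM td ∧ -(Y (ψR η)) = η :=
    fun η hη => hψRspec0 η hη
  have hmemR : ∀ η, η ∈ Icc (-c) aM → -η ∈ Icc (-(Y tM)) (-(Y td)) := by
    intro η hη
    constructor
    · rw [neg_le_neg_iff]; exact hη.2
    · rw [neg_le_neg_iff, hYtdc]; exact hη.1
  set TR : ℝ → ℝ := fun η => ψR (-η) with hTR_def
  have hTRspec : ∀ η ∈ Icc (-c) aM, TR η ∈ Icc tM td ∧ Y (TR η) = η := by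
    intro η hη
    obtain ⟨h2, h3⟩ := hψRspec (-η) (hmemR η hη)
    exact ⟨h2, by have := neg_injective h3; simpa using this⟩
  have hTRleft : ∀ t ∈ Icc tM td, TR (Y t) = t := by
    intro t ht
    have := hψRleft0 t ht
    simp only [hTR_def, neg_neg]
    exact this
  have hTRcont : ContinuousOn TR (Icc (-c) aM) := by
    apply ContinuousOn.comp hψRcont0 continuous_neg.continuousOn
    intro η hη
    exact hmemR η hη
  -- inverse parametrization of the left passage
  obtain ⟨TL, hTLspec0, hTLleft, hTLcont0⟩ :=
    inv_package (φ := Y) (le_of_lt ht₂d) hYcont.continuousOn hYmono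
  have hsubL : Icc (-c) a' ⊆ Icc (Y td) (Y t₂) := by
    intro η hη
    exact ⟨by rw [hYtdc]; exact hη.1, hη.2⟩
  have hTLspec : ∀ η ∈ Icc (-c) a', TL η ∈ Icc td t₂ ∧ Y (TL η) = η := by
    intro η hη
    exact hTLspec0 η (hsubL hη)
  have hTLcont : ContinuousOn TL (Icc (-c) a') := hTLcont0.mono hsubL
  -- the two branch functions, parametrized by the Y-level
  set V₂ : ℝ → ℝ := fun η => u (TR η) with hV₂_def
  set V₁ : ℝ → ℝ := fun η => -(u (TL η)) with hV₁_def
  have hca' : -c < a' := by linarith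
  have hccaM : -c < aM := by linarith
  have hV₂cont : ContinuousOn V₂ (Icc (-c) aM) := hucont.comp_continuousOn hTRcont
  have hV₁cont : ContinuousOn V₁ (Icc (-c) a') :=
    (hucont.comp_continuousOn hTLcont).neg
  have htdIcc : td ∈ Icc tM td := ⟨le_of_lt htdM, le_refl _⟩
  have htMIcc : tM ∈ Icc tM td := ⟨le_refl _, le_of_lt htdM⟩
  have hV₂end1 : V₂ (-c) = 0 := by
    have h := hTRleft td htdIcc
    rw [hYtdc] at h
    show u (TR (-c)) = 0
    rw [h, htd0]
  have hV₂end2 : V₂ aM = 0 := by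
    have h := hTRleft tM htMIcc
    show u (TR aM) = 0
    rw [haM_def, h, huM]
  have hV₂pos : ∀ η ∈ Ioo (-c) aM, 0 < V₂ η := by
    intro η hη
    obtain ⟨hmem, hYeq⟩ := hTRspec η ⟨le_of_lt hη.1, le_of_lt hη.2⟩
    have h1 : TR η ≠ tM := by
      intro hcon; rw [hcon] at hYeq; rw [← hYeq] at hη; exact lt_irrefl _ hη.2
    have h2 : TR η ≠ td := by
      intro hcon; rw [hcon] at hYeq; rw [hYtdc] at hYeq; rw [← hYeq] at hη
      exact lt_irrefl _ hη.1
    exact hupos _ (lt_of_le_of_ne hmem.1 (Ne.symm h1)) (lt_of_le_of_ne hmem.2 h2)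
  have hV₂nonneg : ∀ η ∈ Icc (-c) aM, 0 ≤ V₂ η := by
    intro η hη
    rcases eq_or_lt_of_le hη.1 with h | h
    · rw [← h, hV₂end1]
    · rcases eq_or_lt_of_le hη.2 with h' | h'
      · rw [h', hV₂end2]
      · exact le_of_lt (hV₂pos η ⟨h, h'⟩)
  have htdIcc2 : td ∈ Icc td t₂ := ⟨le_refl _, le_of_lt ht₂d⟩
  have ht₂Icc2 : t₂ ∈ Icc td t₂ := ⟨le_of_lt ht₂d, le_refl _⟩
  have hV₁end1 : V₁ (-c) = 0 := by
    have h := hTLleft td htdIcc2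
    rw [hYtdc] at h
    show -(u (TL (-c))) = 0
    rw [h, htd0, neg_zero]
  have hV₁end2 : V₁ a' = 0 := by
    have h := hTLleft t₂ ht₂Icc2
    show -(u (TL a')) = 0
    rw [ha'_def, h, ht₂0, neg_zero]
  have hV₁pos : ∀ η ∈ Ioo (-c) a', 0 < V₁ η := by
    intro η hη
    obtain ⟨hmem, hYeq⟩ := hTLspec η ⟨le_of_lt hη.1, le_of_lt hη.2⟩
    have h1 : TL η ≠ td := by
      intro hcon; rw [hcon, hYtdc] at hYeq; rw [← hYeq] at hη; exact lt_irrefl _ hη.1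
    have h2 : TL η ≠ t₂ := by
      intro hcon; rw [hcon] at hYeq; rw [← hYeq] at hη
      exact lt_irrefl _ hη.2
    have := huneg _ (lt_of_le_of_ne hmem.1 (Ne.symm h1)) (lt_of_le_of_ne hmem.2 h2)
    show 0 < -(u (TL η))
    linarith
  have hV₁nonneg : ∀ η ∈ Icc (-c) a', 0 ≤ V₁ η := by
    intro η hη
    rcases eq_or_lt_of_le hη.1 with h | h
    · rw [← h, hV₁end1]
    · rcases eq_or_lt_of_le hη.2 with h' | h'
      · rw [h', hV₁end2]
      · exact le_of_lt (hV₁pos η ⟨h, h'⟩)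
  have hV₁lt : ∀ η, V₁ η < s := by
    intro η
    show -(u (TL η)) < s
    linarith [hub (TL η)]
  -- the squared branch functions satisfy explicit integral identities in the Y-level
  have hgRcont : ContinuousOn (fun η => (-2) * (η - δ * Δ (V₂ η))) (Icc (-c) aM) := by
    apply ContinuousOn.mul continuousOn_const
    exact (continuousOn_id.sub (continuousOn_const.mul (hΔcont.comp_continuousOn hV₂cont)))
  have hgLcont : ContinuousOn (fun η => (-2) * (η - δ * Δ (-(V₁ η)))) (Icc (-c) a') := by
    apply ContinuousOn.mul continuousOn_const
    exact (continuousOn_id.sub (continuousOn_const.mul (hΔcont.comp_continuousOn hV₁cont.neg)))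
  have hbranchR : ∀ η₁ η₂, -c ≤ η₁ → η₁ ≤ η₂ → η₂ ≤ aM →
      (V₂ η₂) ^ 2 - (V₂ η₁) ^ 2 = ∫ η in η₁..η₂, (-2) * (η - δ * Δ (V₂ η)) := by
    intro η₁ η₂ h1 h2 h3
    have hm₁ : η₁ ∈ Icc (-c) aM := ⟨h1, le_trans h2 h3⟩
    have hm₂ : η₂ ∈ Icc (-c) aM := ⟨le_trans h1 h2, h3⟩
    obtain ⟨hτ₁mem, hτ₁Y⟩ := hTRspec η₁ hm₁
    obtain ⟨hτ₂mem, hτ₂Y⟩ := hTRspec η₂ hm₂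
    have hττ : TR η₂ ≤ TR η₁ := by
      by_contra hcon
      push_neg at hcon
      have := hYanti hτ₁mem hτ₂mem hcon
      rw [hτ₁Y, hτ₂Y] at this
      linarith
    have hsubIcc : Icc (TR η₂) (TR η₁) ⊆ Icc tM td := fun t ht =>
      ⟨le_trans hτ₂mem.1 ht.1, le_trans ht.2 hτ₁mem.2⟩
    have hFTC : ∫ t in (TR η₂)..(TR η₁), (2 * u t * (Y t - δ * Δ (u t)))
        = (u (TR η₁)) ^ 2 - (u (TR η₂)) ^ 2 := by
      have hh := intervalIntegral.integral_eq_sub_of_hasDerivAt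
        (f := fun t => u t ^ 2) (f' := fun t => 2 * u t * (Y t - δ * Δ (u t)))
        (a := TR η₂) (b := TR η₁)
        (fun z _ => by
          have h := (hu' z).pow 2
          refine h.congr_deriv ?_
          push_cast; ring)
        (by apply Continuous.intervalIntegrable; fun_prop)
      simpa using hh
    have hcongr : EqOn (fun r => 2 * u r * (Y r - δ * Δ (u r)))
        (fun r => ((fun η => (-2) * (η - δ * Δ (V₂ η))) ∘ Y) r * (-(u r)))
        (uIcc (TR η₂) (TR η₁)) := by
      intro t ht
      rw [uIcc_of_le hττ] at ht
      have htmem : t ∈ Icc tM td := hsubIcc ht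
      have hVt : V₂ (Y t) = u t := by
        show u (TR (Y t)) = u t
        rw [hTRleft t htmem]
      simp only [Function.comp_apply]
      rw [hVt]
      ring
    have himg : Y '' uIcc (TR η₂) (TR η₁) ⊆ Icc (-c) aM := by
      rintro _ ⟨t, ht, rfl⟩
      rw [uIcc_of_le hττ] at ht
      have htmem : t ∈ Icc tM td := hsubIcc ht
      constructor
      · rw [← hYtdc]
        exact hYanti.antitoneOn htmem htdIcc htmem.2
      · exact hYmax t
    have hsubst : ∫ t in (TR η₂)..(TR η₁),
        ((fun η => (-2) * (η - δ * Δ (V₂ η))) ∘ Y) t * (-(u t))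
        = ∫ η in (Y (TR η₂))..(Y (TR η₁)), (-2) * (η - δ * Δ (V₂ η)) := by
      apply intervalIntegral.integral_comp_mul_deriv' (fun z _ => hY' z)
        (hucont.neg.continuousOn)
      exact hgRcont.mono himg
    have h4 : (u (TR η₁)) ^ 2 - (u (TR η₂)) ^ 2
        = ∫ η in η₂..η₁, (-2) * (η - δ * Δ (V₂ η)) := by
      rw [← hFTC, intervalIntegral.integral_congr hcongr, hsubst, hτ₂Y, hτ₁Y]
    have h5 : (V₂ η₂) ^ 2 - (V₂ η₁) ^ 2
        = -((u (TR η₁)) ^ 2 - (u (TR η₂)) ^ 2) := by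
      show (u (TR η₂)) ^ 2 - (u (TR η₁)) ^ 2 = _
      ring
    rw [h5, h4, ← intervalIntegral.integral_symm]
  have hbranchL : ∀ η₁ η₂, -c ≤ η₁ → η₁ ≤ η₂ → η₂ ≤ a' →
      (V₁ η₂) ^ 2 - (V₁ η₁) ^ 2 = ∫ η in η₁..η₂, (-2) * (η - δ * Δ (-(V₁ η))) := by
    intro η₁ η₂ h1 h2 h3
    have hm₁ : η₁ ∈ Icc (-c) a' := ⟨h1, le_trans h2 h3⟩
    have hm₂ : η₂ ∈ Icc (-c) a' := ⟨le_trans h1 h2, h3⟩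
    obtain ⟨hτ₁mem, hτ₁Y⟩ := hTLspec η₁ hm₁
    obtain ⟨hτ₂mem, hτ₂Y⟩ := hTLspec η₂ hm₂
    have hττ : TL η₁ ≤ TL η₂ := by
      by_contra hcon
      push_neg at hcon
      have := hYmono hτ₂mem hτ₁mem hcon
      rw [hτ₁Y, hτ₂Y] at this
      linarith
    have hsubIcc : Icc (TL η₁) (TL η₂) ⊆ Icc td t₂ := fun t ht =>
      ⟨le_trans hτ₁mem.1 ht.1, le_trans ht.2 hτ₂mem.2⟩
    have hFTC : ∫ t in (TL η₁)..(TL η₂), (2 * u t * (Y t - δ * Δ (u t)))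
        = (u (TL η₂)) ^ 2 - (u (TL η₁)) ^ 2 := by
      have hh := intervalIntegral.integral_eq_sub_of_hasDerivAt
        (f := fun t => u t ^ 2) (f' := fun t => 2 * u t * (Y t - δ * Δ (u t)))
        (a := TL η₁) (b := TL η₂)
        (fun z _ => by
          have h := (hu' z).pow 2
          refine h.congr_deriv ?_
          push_cast; ring)
        (by apply Continuous.intervalIntegrable; fun_prop)
      simpa using hh
    have hcongr : EqOn (fun r => 2 * u r * (Y r - δ * Δ (u r)))
        (fun r => ((fun η => (-2) * (η - δ * Δ (-(V₁ η)))) ∘ Y) r * (-(u r)))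
        (uIcc (TL η₁) (TL η₂)) := by
      intro t ht
      rw [uIcc_of_le hττ] at ht
      have htmem : t ∈ Icc td t₂ := hsubIcc ht
      have hVt : -(V₁ (Y t)) = u t := by
        show -(-(u (TL (Y t)))) = u t
        rw [hTLleft t htmem, neg_neg]
      simp only [Function.comp_apply]
      rw [hVt]
      ring
    have himg : Y '' uIcc (TL η₁) (TL η₂) ⊆ Icc (-c) a' := by
      rintro _ ⟨t, ht, rfl⟩
      rw [uIcc_of_le hττ] at ht
      have htmem : t ∈ Icc td t₂ := hsubIcc ht
      constructor
      · rw [← hYtdc]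
        exact hYmono.monotoneOn htdIcc2 htmem htmem.1
      · exact hYmono.monotoneOn htmem ht₂Icc2 htmem.2
    have hsubst : ∫ t in (TL η₁)..(TL η₂),
        ((fun η => (-2) * (η - δ * Δ (-(V₁ η)))) ∘ Y) t * (-(u t))
        = ∫ η in (Y (TL η₁))..(Y (TL η₂)), (-2) * (η - δ * Δ (-(V₁ η))) := by
      apply intervalIntegral.integral_comp_mul_deriv' (fun z _ => hY' z)
        (hucont.neg.continuousOn)
      exact hgLcont.mono himg
    have h4 : (u (TL η₂)) ^ 2 - (u (TL η₁)) ^ 2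
        = ∫ η in η₁..η₂, (-2) * (η - δ * Δ (-(V₁ η))) := by
      rw [← hFTC, intervalIntegral.integral_congr hcongr, hsubst, hτ₁Y, hτ₂Y]
    have h5 : (V₁ η₂) ^ 2 - (V₁ η₁) ^ 2 = (u (TL η₂)) ^ 2 - (u (TL η₁)) ^ 2 := by
      show (-(u (TL η₂))) ^ 2 - (-(u (TL η₁))) ^ 2 = _
      ring
    rw [h5, h4]
  -- the comparison function W and the integrand G
  set W : ℝ → ℝ := fun η => (V₁ η) ^ 2 - (V₂ η) ^ 2 with hW_def
  set G : ℝ → ℝ := fun η => 2 * δ * (Δ (-(V₁ η)) - Δ (V₂ η)) with hG_def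
  have hV₂cont' : ContinuousOn V₂ (Icc (-c) a') := hV₂cont.mono (Icc_subset_Icc_right ha'le)
  have hGcont : ContinuousOn G (Icc (-c) a') := by
    apply ContinuousOn.mul continuousOn_const
    exact (hΔcont.comp_continuousOn hV₁cont.neg).sub (hΔcont.comp_continuousOn hV₂cont')
  have hWcont : ContinuousOn W (Icc (-c) a') := (hV₁cont.pow 2).sub (hV₂cont'.pow 2)
  have hW0 : W (-c) = 0 := by
    show (V₁ (-c)) ^ 2 - (V₂ (-c)) ^ 2 = 0
    rw [hV₁end1, hV₂end1]; ring
  have hmaster : ∀ η₁ η₂, -c ≤ η₁ → η₁ ≤ η₂ → η₂ ≤ a' →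
      W η₂ - W η₁ = ∫ η in η₁..η₂, G η := by
    intro η₁ η₂ h1 h2 h3
    have hR := hbranchR η₁ η₂ h1 h2 (le_trans h3 ha'le)
    have hL := hbranchL η₁ η₂ h1 h2 h3
    have hIcc : Icc η₁ η₂ ⊆ Icc (-c) a' := Icc_subset_Icc h1 h3
    have hint1 : IntervalIntegrable (fun η => (-2) * (η - δ * Δ (-(V₁ η))))
        MeasureTheory.volume η₁ η₂ := by
      apply ContinuousOn.intervalIntegrable
      rw [uIcc_of_le h2]
      exact hgLcont.mono hIcc
    have hint2 : IntervalIntegrable (fun η => (-2) * (η - δ * Δ (V₂ η)))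
        MeasureTheory.volume η₁ η₂ := by
      apply ContinuousOn.intervalIntegrable
      rw [uIcc_of_le h2]
      exact hgRcont.mono (subset_trans hIcc (Icc_subset_Icc_right ha'le))
    have hWd : W η₂ - W η₁ = (∫ η in η₁..η₂, (-2) * (η - δ * Δ (-(V₁ η))))
        - (∫ η in η₁..η₂, (-2) * (η - δ * Δ (V₂ η))) := by
      show ((V₁ η₂) ^ 2 - (V₂ η₂) ^ 2) - ((V₁ η₁) ^ 2 - (V₂ η₁) ^ 2) = _
      rw [← hL, ← hR]; ring
    rw [hWd, ← intervalIntegral.integral_sub hint1 hint2]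
    apply intervalIntegral.integral_congr
    intro η _
    show (-2) * (η - δ * Δ (-(V₁ η))) - (-2) * (η - δ * Δ (V₂ η)) = G η
    show _ = 2 * δ * (Δ (-(V₁ η)) - Δ (V₂ η))
    ring
  -- pointwise sign of the integrand
  have hstart_nonneg : ∀ η ∈ Icc (-c) a', V₁ η < s / 7 → V₂ η < s / 7 → 0 ≤ G η := by
    intro η hη h1 h2
    have hV1nn := hV₁nonneg η hη
    have hV2nn := hV₂nonneg η ⟨hη.1, le_trans hη.2 ha'le⟩
    have hkey : Δ (V₂ η) ≤ Δ (-(V₁ η)) := by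
      rcases le_total (V₂ η) (V₁ η) with h | h
      · have e1 : Δ (V₂ η) ≤ Δ (-(V₂ η)) :=
          halg_refl _ hV2nn (by clear_value s V₁ V₂; linarith only [h, hV₁lt η])
        have e2 : Δ (-(V₂ η)) ≤ Δ (-(V₁ η)) :=
          halg_mono (-(V₁ η)) (-(V₂ η)) (by clear_value s V₁; linarith only [hV₁lt η])
            (by clear_value V₁ V₂; linarith only [h])
            (le_trans (neg_nonpos.mpr hV2nn) (div_nonneg hs0.le (by norm_num)))
        clear_value Δ V₁ V₂
        linarith only [e1, e2]
      · have e1 : Δ (V₁ η) ≤ Δ (-(V₁ η)) := halg_refl _ hV1nn (le_of_lt (hV₁lt η))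
        have e2 : Δ (V₂ η) ≤ Δ (V₁ η) :=
          halg_mono (V₁ η) (V₂ η) (by clear_value s V₁; linarith only [hV1nn, hs0]) h
            (by clear_value s V₂; linarith only [h2])
        clear_value Δ V₁ V₂
        linarith only [e1, e2]
    show 0 ≤ 2 * δ * (Δ (-(V₁ η)) - Δ (V₂ η))
    refine mul_nonneg (by linarith only [hδ]) ?_
    clear_value Δ V₁ V₂
    linarith only [hkey]
  have hgood_nonneg : ∀ η ∈ Icc (-c) a', V₂ η ≤ V₁ η → 0 ≤ G η := by
    intro η hη h
    have hV2nn := hV₂nonneg η ⟨hη.1, le_trans hη.2 ha'le⟩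
    have e1 : Δ (V₂ η) ≤ Δ (-(V₂ η)) :=
      halg_refl _ hV2nn (by clear_value s V₁ V₂; linarith only [h, hV₁lt η])
    have e2 : Δ (-(V₂ η)) ≤ Δ (-(V₁ η)) :=
      halg_mono (-(V₁ η)) (-(V₂ η)) (by clear_value s V₁; linarith only [hV₁lt η])
        (by clear_value V₁ V₂; linarith only [h])
        (le_trans (neg_nonpos.mpr hV2nn) (div_nonneg hs0.le (by norm_num)))
    show 0 ≤ 2 * δ * (Δ (-(V₁ η)) - Δ (V₂ η))
    refine mul_nonneg (by linarith only [hδ]) ?_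
    clear_value Δ V₁ V₂
    linarith only [e1, e2]
  -- W ≥ 0 on [-c, a']
  have hWge : ∀ η ∈ Icc (-c) a', 0 ≤ W η := by
    by_contra hcon
    push_neg at hcon
    obtain ⟨ηstar, hηstar, hWstar⟩ := hcon
    set Bad := {η : ℝ | η ∈ Icc (-c) a' ∧ W η < 0} with hBad_def
    have hBadne : Bad.Nonempty := ⟨ηstar, hηstar, hWstar⟩
    have hBadbdd : BddBelow Bad := ⟨-c, fun η hη => hη.1.1⟩
    set η₀ := sInf Bad with hη₀_def
    have hη₀mem : η₀ ∈ Icc (-c) a' :=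
      ⟨le_csInf hBadne (fun η hη => hη.1.1),
        le_trans (csInf_le hBadbdd ⟨hηstar, hWstar⟩) hηstar.2⟩
    have hbadapprox : ∀ ε, 0 < ε → ∃ β ∈ Bad, β < η₀ + ε := by
      intro ε hε
      by_contra hc
      push_neg at hc
      have : η₀ + ε ≤ η₀ := le_csInf hBadne hc
      linarith
    have hW₀ : W η₀ = 0 := by
      have hge0 : 0 ≤ W η₀ := by
        rcases eq_or_lt_of_le hη₀mem.1 with h | h
        · rw [← h, hW0]
        · have hclos : η₀ ∈ closure (Ioo (-c) η₀) := by
            rw [closure_Ioo (ne_of_lt h)]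
            exact ⟨le_of_lt h, le_refl _⟩
          haveI hne : (𝓝[Ioo (-c) η₀] η₀).NeBot := mem_closure_iff_nhdsWithin_neBot.1 hclos
          have hsub2 : Ioo (-c) η₀ ⊆ Icc (-c) a' := fun r hr =>
            ⟨le_of_lt hr.1, le_trans (le_of_lt hr.2) hη₀mem.2⟩
          have htend : Tendsto W (𝓝[Ioo (-c) η₀] η₀) (𝓝 (W η₀)) :=
            (hWcont η₀ hη₀mem).mono_left (nhdsWithin_mono _ hsub2)
          apply ge_of_tendsto htend
          apply Filter.eventually_of_mem self_mem_nhdsWithin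
          intro r hr
          by_contra hcr
          push_neg at hcr
          have hrB : r ∈ Bad := ⟨hsub2 hr, hcr⟩
          have hup := csInf_le hBadbdd hrB
          rw [← hη₀_def] at hup
          clear_value η₀
          linarith only [hup, hr.2]
      have hle0 : W η₀ ≤ 0 := by
        by_contra hc
        push_neg at hc
        have hcw : ContinuousWithinAt W (Icc (-c) a') η₀ := hWcont η₀ hη₀mem
        rw [Metric.continuousWithinAt_iff] at hcw
        obtain ⟨ε', hε', hball⟩ := hcw (W η₀ / 2) (half_pos hc)
        obtain ⟨β, hβBad, hβlt⟩ := hbadapprox ε' hε'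
        have hβge : η₀ ≤ β := csInf_le hBadbdd hβBad
        have hd := hball hβBad.1
          (by rw [Real.dist_eq, abs_lt]
              constructor <;> (clear_value η₀; linarith only [hβge, hβlt, hε']))
        rw [Real.dist_eq] at hd
        have h6 := abs_lt.1 hd
        have hWβn := hβBad.2
        clear_value W η₀
        linarith only [h6.1, hWβn, hc]
      clear_value W η₀
      linarith only [hge0, hle0]
    have hVeq : V₂ η₀ = V₁ η₀ := by
      have h1 : (V₁ η₀) ^ 2 - (V₂ η₀) ^ 2 = 0 := hW₀
      have h2 := hV₁nonneg η₀ hη₀mem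
      have h3 := hV₂nonneg η₀ ⟨hη₀mem.1, le_trans hη₀mem.2 ha'le⟩
      have hdiff : (V₁ η₀ - V₂ η₀) * (V₁ η₀ + V₂ η₀) = 0 := by linear_combination h1
      clear_value V₁ V₂ η₀
      rcases mul_eq_zero.1 hdiff with h | h
      · linarith only [h]
      · linarith only [h, h2, h3]
    have hη₀lt : η₀ < a' := by
      rcases lt_or_eq_of_le hη₀mem.2 with h | h
      · exact h
      · exfalso
        obtain ⟨β, hβBad, _⟩ := hbadapprox 1 one_pos
        have h1 : η₀ ≤ β := csInf_le hBadbdd hβBad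
        have h2 : β ≤ a' := hβBad.1.2
        have hβeq : β = η₀ := by rw [h]; clear_value η₀ a'; linarith only [h1, h2, h]
        have hx1 : W β < 0 := hβBad.2
        rw [hβeq, hW₀] at hx1
        exact lt_irrefl _ hx1
    rcases eq_or_lt_of_le hη₀mem.1 with hstart | hη₀gt
    · -- near-start case
      have hcw1 : ContinuousWithinAt V₁ (Icc (-c) a') (-c) :=
        hV₁cont _ (left_mem_Icc.2 (le_of_lt hca'))
      rw [Metric.continuousWithinAt_iff] at hcw1
      obtain ⟨ε₃, hε₃, hb1⟩ := hcw1 (s / 7) (by linarith)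
      have hcw2 : ContinuousWithinAt V₂ (Icc (-c) a') (-c) :=
        hV₂cont' _ (left_mem_Icc.2 (le_of_lt hca'))
      rw [Metric.continuousWithinAt_iff] at hcw2
      obtain ⟨ε₄, hε₄, hb2⟩ := hcw2 (s / 7) (by linarith)
      have hmε : 0 < min ε₃ ε₄ := lt_min hε₃ hε₄
      set ζ := min a' (-c + min ε₃ ε₄ / 2) with hζ_def
      have hζ1 : -c < ζ := lt_min hca' (by clear_value c; linarith only [hmε])
      have hζ2 : ζ ≤ a' := min_le_left _ _
      have hsmall : ∀ η ∈ Icc (-c) ζ, V₁ η < s / 7 ∧ V₂ η < s / 7 := by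
        intro η hη
        have hmem1 : η ∈ Icc (-c) a' := ⟨hη.1, le_trans hη.2 hζ2⟩
        have hζ3 : ζ ≤ -c + min ε₃ ε₄ / 2 := min_le_right _ _
        have hdist : |η - (-c)| < min ε₃ ε₄ := by
          rw [abs_of_nonneg (by clear_value c ζ; linarith only [hη.1])]
          clear_value c ζ
          linarith only [hη.2, hζ3, hmε]
        constructor
        · have hd := hb1 hmem1
            (by rw [Real.dist_eq]; exact lt_of_lt_of_le hdist (min_le_left _ _))
          rw [Real.dist_eq, hV₁end1, sub_zero] at hd
          exact lt_of_le_of_lt (le_abs_self _) hd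
        · have hd := hb2 hmem1
            (by rw [Real.dist_eq]; exact lt_of_lt_of_le hdist (min_le_right _ _))
          rw [Real.dist_eq, hV₂end1, sub_zero] at hd
          exact lt_of_le_of_lt (le_abs_self _) hd
      have hWposζ : ∀ η ∈ Icc (-c) ζ, 0 ≤ W η := by
        intro η hη
        have hm := hmaster (-c) η (le_refl _) hη.1 (le_trans hη.2 hζ2)
        rw [hW0, sub_zero] at hm
        rw [hm]
        apply intervalIntegral.integral_nonneg hη.1
        intro r hr
        have hr2 : r ∈ Icc (-c) ζ := ⟨hr.1, le_trans hr.2 hη.2⟩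
        exact hstart_nonneg r ⟨hr.1, le_trans hr2.2 hζ2⟩ (hsmall r hr2).1 (hsmall r hr2).2
      obtain ⟨β, hβBad, hβlt⟩ :=
        hbadapprox (ζ - η₀) (by rw [← hstart]; clear_value c ζ; linarith only [hζ1])
      have hβm : β ∈ Icc (-c) ζ := ⟨hβBad.1.1, by clear_value ζ η₀; linarith only [hβlt]⟩
      have hx1 := hWposζ β hβm
      have hx2 := hβBad.2
      clear_value W
      linarith only [hx1, hx2]
    · -- interior case
      have hv0pos : 0 < V₁ η₀ := hV₁pos η₀ ⟨hη₀gt, hη₀lt⟩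
      have hv0lt : V₁ η₀ < s := hV₁lt η₀
      have hGpos : 0 < G η₀ := by
        have hst := halg_refl_strict (V₁ η₀) hv0pos hv0lt
        show 0 < 2 * δ * (Δ (-(V₁ η₀)) - Δ (V₂ η₀))
        rw [hVeq]
        exact mul_pos (by linarith only [hδ]) (by clear_value Δ V₁ η₀; linarith only [hst])
      have hcwG : ContinuousWithinAt G (Icc (-c) a') η₀ := hGcont η₀ hη₀mem
      rw [Metric.continuousWithinAt_iff] at hcwG
      obtain ⟨ε₅, hε₅, hbG⟩ := hcwG (G η₀ / 2) (half_pos hGpos)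
      obtain ⟨β, hβBad, hβlt⟩ :=
        hbadapprox (min ε₅ (a' - η₀)) (lt_min hε₅ (by clear_value η₀ a'; linarith only [hη₀lt]))
      have hβge : η₀ ≤ β := csInf_le hBadbdd hβBad
      have hβne : η₀ < β := by
        rcases eq_or_lt_of_le hβge with h | h
        · exfalso
          have hx1 : W β < 0 := hβBad.2
          rw [← h, hW₀] at hx1
          exact lt_irrefl _ hx1
        · exact h
      have hGlow : ∀ r ∈ Icc η₀ β, G η₀ / 2 ≤ G r := by
        intro r hr
        have hrm : r ∈ Icc (-c) a' := ⟨le_trans hη₀mem.1 hr.1, le_trans hr.2 hβBad.1.2⟩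
        have hrd : |r - η₀| < ε₅ := by
          rw [abs_of_nonneg (by clear_value η₀; linarith only [hr.1])]
          clear_value η₀ a'
          linarith only [hr.2, hβlt, min_le_left ε₅ (a' - η₀)]
        have hd := hbG hrm (by rw [Real.dist_eq]; exact hrd)
        rw [Real.dist_eq] at hd
        have h6 := abs_lt.1 hd
        clear_value G η₀
        linarith only [h6.1]
      have hm := hmaster η₀ β hη₀mem.1 (le_of_lt hβne) hβBad.1.2
      rw [hW₀, sub_zero] at hm
      have hintG : IntervalIntegrable G MeasureTheory.volume η₀ β := by
        apply ContinuousOn.intervalIntegrable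
        rw [uIcc_of_le (le_of_lt hβne)]
        exact hGcont.mono (Icc_subset_Icc hη₀mem.1 hβBad.1.2)
      have hlow : ∫ _ in η₀..β, G η₀ / 2 ≤ ∫ r in η₀..β, G r :=
        intervalIntegral.integral_mono_on (le_of_lt hβne)
          intervalIntegrable_const hintG hGlow
      rw [intervalIntegral.integral_const, smul_eq_mul] at hlow
      have hWβ := hβBad.2
      rw [hm] at hWβ
      have hp : 0 < (β - η₀) * (G η₀ / 2) :=
        mul_pos (by clear_value η₀; linarith only [hβne]) (by clear_value G η₀; linarith only [hGpos])
      clear_value G η₀ W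
      linarith only [hp, hWβ, hlow]
  -- endgame
  rcases lt_or_eq_of_le ha'le with hlt | heq
  · -- a' < aM : the right branch is still positive at level a'
    have h1 : 0 < V₂ a' := hV₂pos a' ⟨hca', hlt⟩
    have h2 := hWge a' (right_mem_Icc.2 (le_of_lt hca'))
    have h3 : W a' = 0 - (V₂ a') ^ 2 := by
      show (V₁ a') ^ 2 - (V₂ a') ^ 2 = _
      rw [hV₁end2]; ring
    have h4 : 0 < (V₂ a') ^ 2 := pow_pos h1 2
    clear_value W V₂ a'
    linarith only [h2, h3, h4]
  · -- a' = aM : W vanishes identically, contradicting strict growth at level 0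
    have hWa' : W a' = 0 := by
      show (V₁ a') ^ 2 - (V₂ a') ^ 2 = 0
      rw [hV₁end2, heq, hV₂end2]; ring
    have hGnn : ∀ η ∈ Icc (-c) a', 0 ≤ G η := by
      intro η hη
      apply hgood_nonneg η hη
      have h1 := hWge η hη
      have h2 := hV₁nonneg η hη
      have h3 := hV₂nonneg η ⟨hη.1, le_trans hη.2 ha'le⟩
      by_contra hcn
      push_neg at hcn
      have h5 : (V₁ η) ^ 2 < (V₂ η) ^ 2 := by
        apply pow_lt_pow_left₀ hcn h2
        norm_num
      have h6 : (V₁ η) ^ 2 - (V₂ η) ^ 2 = W η := rfl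
      clear_value V₁ V₂ W
      linarith only [h5, h6, h1]
    have hWzero : ∀ η ∈ Icc (-c) a', W η = 0 := by
      intro η hη
      have hm := hmaster η a' hη.1 hη.2 (le_refl _)
      rw [hWa'] at hm
      have hnn : 0 ≤ ∫ r in η..a', G r :=
        intervalIntegral.integral_nonneg hη.2 (fun r hr => hGnn r ⟨le_trans hη.1 hr.1, hr.2⟩)
      have hw := hWge η hη
      clear_value W G a'
      linarith only [hm, hnn, hw]
    have ha'pos : 0 < a' := hYt₂
    have h0mem : (0:ℝ) ∈ Icc (-c) a' :=
      ⟨by clear_value c; linarith only [hcpos], by clear_value a'; linarith only [ha'pos]⟩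
    have h0in : (0:ℝ) ∈ Ioo (-c) a' :=
      ⟨by clear_value c; linarith only [hcpos], by clear_value a'; linarith only [ha'pos]⟩
    have hv0pos : 0 < V₁ 0 := hV₁pos 0 h0in
    have hv0lt : V₁ 0 < s := hV₁lt 0
    have hVeq0 : V₂ 0 = V₁ 0 := by
      have h1 : (V₁ 0) ^ 2 - (V₂ 0) ^ 2 = 0 := hWzero 0 h0mem
      have h2 := hV₁nonneg 0 h0mem
      have h3 := hV₂nonneg 0 ⟨h0mem.1, le_trans h0mem.2 ha'le⟩
      have hdiff : (V₁ 0 - V₂ 0) * (V₁ 0 + V₂ 0) = 0 := by linear_combination h1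
      clear_value V₁ V₂
      rcases mul_eq_zero.1 hdiff with h | h
      · linarith only [h]
      · linarith only [h, h2, h3]
    have hGpos : 0 < G 0 := by
      have hst := halg_refl_strict (V₁ 0) hv0pos hv0lt
      show 0 < 2 * δ * (Δ (-(V₁ 0)) - Δ (V₂ 0))
      rw [hVeq0]
      exact mul_pos (by linarith only [hδ]) (by clear_value Δ V₁; linarith only [hst])
    have hcwG : ContinuousWithinAt G (Icc (-c) a') 0 := hGcont 0 h0mem
    rw [Metric.continuousWithinAt_iff] at hcwG
    obtain ⟨ε₅, hε₅, hbG⟩ := hcwG (G 0 / 2) (half_pos hGpos)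
    set ζ := min a' (min ε₅ a' / 2) with hζ_def
    have hζpos : 0 < ζ :=
      lt_min ha'pos (by have h9 := lt_min hε₅ ha'pos; clear_value a'; linarith only [h9])
    have hζle : ζ ≤ a' := min_le_left _ _
    have hGlow : ∀ r ∈ Icc (0:ℝ) ζ, G 0 / 2 ≤ G r := by
      intro r hr
      have hrm : r ∈ Icc (-c) a' := ⟨by clear_value c; linarith only [hr.1, hcpos], le_trans hr.2 hζle⟩
      have hζ3 : ζ ≤ min ε₅ a' / 2 := min_le_right _ _
      have hrd : |r - 0| < ε₅ := by
        rw [sub_zero, abs_of_nonneg hr.1]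
        clear_value ζ a'
        linarith only [hr.2, hζ3, min_le_left ε₅ a', hε₅]
      have hd := hbG hrm (by rw [Real.dist_eq]; exact hrd)
      rw [Real.dist_eq] at hd
      have h6 := abs_lt.1 hd
      clear_value G
      linarith only [h6.1]
    have hm := hmaster 0 ζ h0mem.1 (le_of_lt hζpos) hζle
    rw [hWzero 0 h0mem, hWzero ζ ⟨by clear_value c ζ; linarith only [hcpos, hζpos], hζle⟩,
      sub_zero] at hm
    have hintG : IntervalIntegrable G MeasureTheory.volume 0 ζ := by
      apply ContinuousOn.intervalIntegrable
      rw [uIcc_of_le (le_of_lt hζpos)]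
      exact hGcont.mono (Icc_subset_Icc h0mem.1 hζle)
    have hlow : ∫ _ in (0:ℝ)..ζ, G 0 / 2 ≤ ∫ r in (0:ℝ)..ζ, G r :=
      intervalIntegral.integral_mono_on (le_of_lt hζpos)
        intervalIntegrable_const hintG hGlow
    rw [intervalIntegral.integral_const, smul_eq_mul] at hlow
    have hp : 0 < (ζ - 0) * (G 0 / 2) :=
      mul_pos (by clear_value ζ; linarith only [hζpos]) (by clear_value G; linarith only [hGpos])
    clear_value ζ G
    linarith only [hp, hlow, hm]
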